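/- In the extremal setup with n ≥ 5000, the spectral radius satisfies λ₁(G*) < n − k + 3/5, where k − 1 is the shortest distance between a vertex of minimum principal-eigenvector entry and a vertex of maximum entry. -/

import Mathlib

open Classical Matrix

/-- The adjacency matrix of a simple graph on `Fin n`, with real entries. -/
noncomputable def adjMat {n : ℕ} (G : SimpleGraph (Fin n)) : Matrix (Fin n) (Fin n) ℝ :=
  Matrix.of fun u v => if G.Adj u v then (1 : ℝ) else 0

/-- `x` is a principal (Perron) eigenvector of the connected graph `G` with eigenvalue `lam`:
it is a positive eigenvector of the adjacency matrix.  By Perron–Frobenius, for a connected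
graph this forces `lam = λ₁(G)`. -/
def IsPrincipalEigenpair {n : ℕ} (G : SimpleGraph (Fin n)) (lam : ℝ) (x : Fin n → ℝ) : Prop :=
  (∀ v, 0 < x v) ∧ adjMat G *ᵥ x = lam • x

/-- The ratio of the maximum to the minimum entry of a vector. -/
noncomputable def pRatio {n : ℕ} (x : Fin n → ℝ) : ℝ := (⨆ v, x v) / (⨅ v, x v)

/-- Degree of a vertex. -/
noncomputable def deg {n : ℕ} (G : SimpleGraph (Fin n)) (v : Fin n) : ℕ :=
  (G.neighborSet v).ncard

/-- The kite (lollipop) graph on `Fin n`: a path on the vertices `0, 1, …, r-1`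
followed by a clique on the vertices `r-1, r, …, n-1`, i.e. `P_r · K_{n-r+1}`. -/
def kiteGraph (n r : ℕ) : SimpleGraph (Fin n) where
  Adj u v := u ≠ v ∧
    ((u.val < r ∧ v.val < r ∧ (u.val + 1 = v.val ∨ v.val + 1 = u.val)) ∨
      (r ≤ u.val + 1 ∧ r ≤ v.val + 1))
  symm := by
    constructor
    rintro u v ⟨h1, h2⟩
    exact ⟨h1.symm, by tauto⟩
  loopless := by
    constructor
    rintro u ⟨h1, -⟩
    exact h1 rfl

lemma adj_mulVec {n : ℕ} (G : SimpleGraph (Fin n)) (x : Fin n → ℝ) (u : Fin n) :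
    (adjMat G *ᵥ x) u = ∑ v, if G.Adj u v then x v else 0 := by
  simp [adjMat, Matrix.mulVec, dotProduct, ite_mul]

lemma eigen_eq {n : ℕ} {G : SimpleGraph (Fin n)} {lam : ℝ} {x : Fin n → ℝ}
    (hpe : IsPrincipalEigenpair G lam x) (u : Fin n) :
    lam * x u = ∑ v, if G.Adj u v then x v else 0 := by
  rw [← adj_mulVec, hpe.2]; rfl

/-- The fixed-point iteration `S μ 0 = μ`, `S μ (i+1) = μ - (S μ i)⁻¹`. -/
noncomputable def Sq (μ : ℝ) : ℕ → ℝ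
  | 0 => μ
  | (i+1) => μ - (Sq μ i)⁻¹

/-- Product of the first `N` values of `S μ`. -/
noncomputable def Fq (μ : ℝ) : ℕ → ℝ
  | 0 => 1
  | (i+1) => Fq μ i * Sq μ i

lemma Sq_ge {μ : ℝ} (hμ : 2 ≤ μ) (i : ℕ) : μ - 1 ≤ Sq μ i := by
  induction i with
  | zero => simp only [Sq]; linarith
  | succ i ih =>
    have h1 : (1:ℝ) ≤ Sq μ i := by linarith
    have : (Sq μ i)⁻¹ ≤ 1 := by
      rw [inv_le_one_iff₀]; right; exact h1
    simp only [Sq]; linarith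

lemma Sq_pos {μ : ℝ} (hμ : 2 ≤ μ) (i : ℕ) : 0 < Sq μ i := by
  have := Sq_ge hμ i; linarith

lemma Sq_le {μ : ℝ} (hμ : 2 ≤ μ) (i : ℕ) : Sq μ i ≤ μ := by
  cases i with
  | zero => simp [Sq]
  | succ i =>
    have := Sq_pos hμ i
    simp only [Sq]
    have : 0 < (Sq μ i)⁻¹ := inv_pos.2 this
    linarith

lemma Fq_pos {μ : ℝ} (hμ : 2 ≤ μ) (N : ℕ) : 0 < Fq μ N := by
  induction N with
  | zero => norm_num [Fq]
  | succ N ih => exact mul_pos ih (Sq_pos hμ N)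

lemma Sq_add_le {μ μ' : ℝ} (hμ : 2 ≤ μ) (hle : μ ≤ μ') (i : ℕ) :
    Sq μ i + (μ' - μ) ≤ Sq μ' i := by
  have hμ' : 2 ≤ μ' := le_trans hμ hle
  induction i with
  | zero => simp [Sq]
  | succ i ih =>
    have h1 : 0 < Sq μ i := Sq_pos hμ i
    have h2 : Sq μ i ≤ Sq μ' i := by linarith
    have : (Sq μ' i)⁻¹ ≤ (Sq μ i)⁻¹ := by
      apply inv_anti₀ h1 h2
    simp only [Sq]; linarith

lemma Sq_mono {μ μ' : ℝ} (hμ : 2 ≤ μ) (hle : μ ≤ μ') (i : ℕ) : Sq μ i ≤ Sq μ' i := by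
  have := Sq_add_le hμ hle i; linarith

lemma Fq_mono {μ μ' : ℝ} (hμ : 2 ≤ μ) (hle : μ ≤ μ') (N : ℕ) : Fq μ N ≤ Fq μ' N := by
  induction N with
  | zero => simp [Fq]
  | succ N ih =>
    simp only [Fq]
    have h1 := Sq_pos hμ N
    have h2 := Sq_mono hμ hle N
    have h3 := Fq_pos hμ N
    nlinarith

/-- quantitative growth of `Fq` in `μ`. -/
lemma Fq_ratio_lower {μ μ' : ℝ} (hμ : 2 ≤ μ) (hle : μ ≤ μ') (N : ℕ) :
    Fq μ N * (1 + (μ' - μ)/μ)^N ≤ Fq μ' N := by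
  have hμ0 : (0:ℝ) < μ := by linarith
  induction N with
  | zero => simp [Fq]
  | succ N ih =>
    simp only [Fq, pow_succ]
    have h1 : Sq μ N * (1 + (μ' - μ)/μ) ≤ Sq μ' N := by
      have h2 := Sq_add_le hμ hle N
      have h3 : Sq μ N * ((μ' - μ)/μ) ≤ μ' - μ := by
        rw [mul_div_assoc']
        rw [div_le_iff₀ hμ0]
        have := Sq_le hμ N
        nlinarith [Sq_pos hμ N, sub_nonneg.2 hle]
      nlinarith
    have h4 : (0:ℝ) ≤ 1 + (μ' - μ)/μ := by
      have : (0:ℝ) ≤ (μ' - μ)/μ := div_nonneg (by linarith) (le_of_lt hμ0)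
      linarith
    calc Fq μ N * Sq μ N * ((1 + (μ' - μ)/μ) ^ N * (1 + (μ' - μ)/μ))
        = (Fq μ N * (1 + (μ' - μ)/μ) ^ N) * (Sq μ N * (1 + (μ' - μ)/μ)) := by ring
      _ ≤ Fq μ' N * Sq μ' N := by
          apply mul_le_mul ih h1
          · exact mul_nonneg (le_of_lt (Sq_pos hμ N)) h4
          · exact le_of_lt (Fq_pos (le_trans hμ hle) N)

lemma Fq_ge {μ : ℝ} (hμ : 2 ≤ μ) (N : ℕ) : (μ - 1)^N ≤ Fq μ N := by
  induction N with
  | zero => simp [Fq]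
  | succ N ih =>
    simp only [Fq, pow_succ]
    have h1 := Sq_ge hμ N
    have h2 : (0:ℝ) ≤ (μ-1)^N := pow_nonneg (by linarith) N
    nlinarith [Fq_pos hμ N]

lemma Fq_ratio_upper {μ : ℝ} (hμ : 2 ≤ μ) (N : ℕ) :
    Fq (μ+1) N ≤ Fq μ N * ((μ+1)/(μ-1))^N := by
  have hμ1 : (0:ℝ) < μ - 1 := by linarith
  induction N with
  | zero => simp [Fq]
  | succ N ih =>
    simp only [Fq, pow_succ]
    have h1 : Sq (μ+1) N ≤ Sq μ N * ((μ+1)/(μ-1)) := by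
      have h2 : Sq (μ+1) N ≤ μ + 1 := Sq_le (by linarith) N
      have h3 : μ - 1 ≤ Sq μ N := Sq_ge hμ N
      calc Sq (μ+1) N ≤ μ + 1 := h2
        _ = (μ-1) * ((μ+1)/(μ-1)) := by field_simp
        _ ≤ Sq μ N * ((μ+1)/(μ-1)) := by
            apply mul_le_mul_of_nonneg_right h3
            exact div_nonneg (by linarith) (le_of_lt hμ1)
    calc Fq (μ+1) N * Sq (μ+1) N ≤ (Fq μ N * ((μ+1)/(μ-1))^N) * (Sq μ N * ((μ+1)/(μ-1))) := by
          apply mul_le_mul ih h1 (le_of_lt (Sq_pos (by linarith) N))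
          exact mul_nonneg (le_of_lt (Fq_pos hμ N))
            (pow_nonneg (div_nonneg (by linarith) (le_of_lt hμ1)) N)
      _ = Fq μ N * Sq μ N * (((μ+1)/(μ-1))^N * ((μ+1)/(μ-1))) := by ring

section Perron

variable {N : ℕ}

lemma dot_self_nonneg (z : Fin N → ℝ) : 0 ≤ z ⬝ᵥ z :=
  Finset.sum_nonneg fun i _ => mul_self_nonneg _

lemma dot_self_pos {z : Fin N → ℝ} (hz : z ≠ 0) : 0 < z ⬝ᵥ z := by
  rcases Function.ne_iff.1 hz with ⟨i, hi⟩
  exact Finset.sum_pos' (fun j _ => mul_self_nonneg _)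
    ⟨i, Finset.mem_univ i, mul_self_pos.2 hi⟩

lemma adj_symm_dot (H : SimpleGraph (Fin N)) (z w : Fin N → ℝ) :
    z ⬝ᵥ (adjMat H *ᵥ w) = w ⬝ᵥ (adjMat H *ᵥ z) := by
  show ∑ u, z u * ((fun j => adjMat H u j) ⬝ᵥ w) = ∑ u, w u * ((fun j => adjMat H u j) ⬝ᵥ z)
  simp only [dotProduct, Finset.mul_sum]
  rw [Finset.sum_comm]
  apply Finset.sum_congr rfl
  intro u _
  apply Finset.sum_congr rfl
  intro v _
  simp only [adjMat, Matrix.of_apply]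
  rw [H.adj_comm]
  ring

lemma perron_exists (hN : 2 ≤ N) (H : SimpleGraph (Fin N)) (hH : H.Connected) :
    ∃ lam y, IsPrincipalEigenpair H lam y := by
  classical
  set A := adjMat H with hA
  set Q : (Fin N → ℝ) → ℝ := fun y => y ⬝ᵥ (A *ᵥ y) with hQdef
  have hQeq : Q = fun y => ∑ u, y u * ∑ v, A u v * y v := rfl
  have hQcont : Continuous Q := by
    rw [hQeq]
    apply continuous_finset_sum
    intro u _
    exact (continuous_apply u).mul
      (continuous_finset_sum _ fun v _ => continuous_const.mul (continuous_apply v))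
  have hdotcont : Continuous (fun y : Fin N → ℝ => y ⬝ᵥ y) := by
    show Continuous fun y : Fin N → ℝ => ∑ u, y u * y u
    apply continuous_finset_sum
    intro u _
    exact (continuous_apply u).mul (continuous_apply u)
  set SP : Set (Fin N → ℝ) := {y | y ⬝ᵥ y = 1} with hSPdef
  have hSPclosed : IsClosed SP := isClosed_eq hdotcont continuous_const
  have hsub : SP ⊆ Metric.closedBall 0 1 := by
    intro y hy
    rw [Metric.mem_closedBall, dist_zero_right]
    rw [pi_norm_le_iff_of_nonneg zero_le_one]
    intro i
    rw [Real.norm_eq_abs, abs_le_one_iff_mul_self_le_one]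
    have h1 : y i * y i ≤ y ⬝ᵥ y :=
      Finset.single_le_sum (f := fun j => y j * y j) (fun j _ => mul_self_nonneg _)
        (Finset.mem_univ i)
    have h2 : y ⬝ᵥ y = 1 := hy
    linarith
  have hSPcpt : IsCompact SP :=
    (ProperSpace.isCompact_closedBall (0 : Fin N → ℝ) 1).of_isClosed_subset hSPclosed hsub
  have hne : SP.Nonempty := by
    refine ⟨Pi.single ⟨0, by omega⟩ 1, ?_⟩
    show Pi.single _ 1 ⬝ᵥ Pi.single _ 1 = 1
    rw [dotProduct_single, Pi.single_eq_same, one_mul]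
  obtain ⟨y0, hy0SP, hmax'⟩ := hSPcpt.exists_isMaxOn hne hQcont.continuousOn
  have hmax : ∀ z ∈ SP, Q z ≤ Q y0 := fun z hz => hmax' hz
  set μ := Q y0 with hμdef
  have hy0SP' : y0 ⬝ᵥ y0 = 1 := hy0SP
  -- Rayleigh bound
  have hray : ∀ z, Q z ≤ μ * (z ⬝ᵥ z) := by
    intro z
    rcases eq_or_ne z 0 with rfl | hz
    · simp [hQdef, Matrix.mulVec_zero, dotProduct_zero, zero_dotProduct]
    · have hzz : 0 < z ⬝ᵥ z := dot_self_pos hz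
      set c : ℝ := Real.sqrt (z ⬝ᵥ z)⁻¹ with hcdef
      have hcc : c * c = (z ⬝ᵥ z)⁻¹ := Real.mul_self_sqrt (by positivity)
      have hmem : (c • z) ∈ SP := by
        show (c • z) ⬝ᵥ (c • z) = 1
        rw [smul_dotProduct, dotProduct_smul, smul_eq_mul, smul_eq_mul,
          ← mul_assoc, hcc]
        field_simp
      have h1 := hmax _ hmem
      have hQc : Q (c • z) = (c * c) * Q z := by
        show (c • z) ⬝ᵥ (A *ᵥ (c • z)) = _
        rw [Matrix.mulVec_smul, smul_dotProduct, dotProduct_smul,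
          smul_eq_mul, smul_eq_mul]
        ring
      rw [hQc, hcc] at h1
      rw [← mul_inv_le_iff₀ hzz]
      rw [mul_comm] at h1
      exact h1
  -- equality case gives eigenvector
  have heig : ∀ y, y ⬝ᵥ y = 1 → Q y = μ → A *ᵥ y = μ • y := by
    intro y hy1 hQy
    have hb : ∀ z, μ * (z ⬝ᵥ y) - z ⬝ᵥ (A *ᵥ y) = 0 := by
      intro z
      set a := μ * (z ⬝ᵥ z) - Q z with hadef
      set b := 2 * (μ * (z ⬝ᵥ y) - z ⬝ᵥ (A *ᵥ y)) with hbdef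
      have hq : ∀ t : ℝ, 0 ≤ a * (t * t) + b * t + 0 := by
        intro t
        have h1 := hray (y + t • z)
        have hsym : y ⬝ᵥ (A *ᵥ z) = z ⬝ᵥ (A *ᵥ y) := adj_symm_dot H y z
        have expand1 : Q (y + t • z) =
            Q y + t * (z ⬝ᵥ (A *ᵥ y)) + t * (y ⬝ᵥ (A *ᵥ z)) + t * t * Q z := by
          show (y + t • z) ⬝ᵥ (A *ᵥ (y + t • z)) = _
          rw [Matrix.mulVec_add, Matrix.mulVec_smul]
          rw [add_dotProduct, dotProduct_add, dotProduct_add]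
          rw [smul_dotProduct, dotProduct_smul, dotProduct_smul,
            smul_dotProduct]
          simp only [smul_eq_mul]
          show y ⬝ᵥ (A *ᵥ y) + t * (y ⬝ᵥ (A *ᵥ z)) + (t * (z ⬝ᵥ (A *ᵥ y)) + t * (t * (z ⬝ᵥ (A *ᵥ z)))) = _
          ring
        have expand2 : (y + t • z) ⬝ᵥ (y + t • z) =
            1 + t * (z ⬝ᵥ y) + t * (y ⬝ᵥ z) + t * t * (z ⬝ᵥ z) := by
          rw [add_dotProduct, dotProduct_add, dotProduct_add,
            smul_dotProduct, dotProduct_smul, dotProduct_smul,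
            smul_dotProduct]
          simp only [smul_eq_mul]
          rw [hy1]
          ring
        have hcomm : y ⬝ᵥ z = z ⬝ᵥ y := dotProduct_comm y z
        rw [expand1, expand2, hcomm, hsym, hQy] at h1
        simp only [hadef, hbdef, hQdef]
        nlinarith [h1]
      have hd := discrim_le_zero hq
      rw [discrim] at hd
      have hb0 : b = 0 := by nlinarith [sq_nonneg b]
      rw [hbdef] at hb0
      linarith
    funext u
    have h := hb (Pi.single u 1)
    rw [single_dotProduct, single_dotProduct, one_mul, one_mul] at h
    have : (A *ᵥ y) u = μ * y u := by linarith
    rw [this]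
    rfl
  -- the absolute-value vector is also a maximizer
  set w : Fin N → ℝ := fun v => |y0 v| with hwdef
  have hw1 : w ⬝ᵥ w = 1 := by
    show ∑ u, w u * w u = 1
    have : ∀ u : Fin N, w u * w u = y0 u * y0 u := fun u => abs_mul_abs_self _
    rw [Finset.sum_congr rfl fun u _ => this u]
    exact hy0SP'
  have hQy0w : Q y0 ≤ Q w := by
    rw [hQeq]
    show ∑ u, y0 u * ∑ v, A u v * y0 v ≤ ∑ u, w u * ∑ v, A u v * w v
    have h1 : ∀ u : Fin N, y0 u * ∑ v, A u v * y0 v ≤ w u * ∑ v, A u v * w v := by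
      intro u
      rw [Finset.mul_sum, Finset.mul_sum]
      apply Finset.sum_le_sum
      intro v _
      have hAnn : (0:ℝ) ≤ A u v ∧ A u v = A u v := ⟨by
        show (0:ℝ) ≤ adjMat H u v
        simp only [adjMat, Matrix.of_apply]
        split <;> norm_num, rfl⟩
      calc y0 u * (A u v * y0 v) ≤ |y0 u * (A u v * y0 v)| := le_abs_self _
        _ = |y0 u| * (A u v * |y0 v|) := by
            rw [abs_mul, abs_mul, abs_of_nonneg hAnn.1]
        _ = w u * (A u v * w v) := rfl
    exact Finset.sum_le_sum fun u _ => h1 u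
  have hQw : Q w = μ := le_antisymm (by
      have := hray w
      rw [hw1, mul_one] at this
      exact this)
    (le_trans (le_of_eq rfl) hQy0w)
  have hweig : A *ᵥ w = μ • w := heig w hw1 hQw
  -- μ ≥ 1 via an edge
  obtain ⟨a, b, hab⟩ : ∃ a b, H.Adj a b := by
    have hreach := hH.preconnected ⟨0, by omega⟩ ⟨1, by omega⟩
    obtain ⟨p⟩ := hreach
    cases p with
    | cons h q => exact ⟨_, _, h⟩
  have hμ1 : 1 ≤ μ := by
    set z : Fin N → ℝ := Pi.single a 1 + Pi.single b 1 with hzdef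
    have hQz : Q z = 2 := by
      show z ⬝ᵥ (A *ᵥ z) = 2
      rw [hzdef, Matrix.mulVec_add, Matrix.mulVec_single, Matrix.mulVec_single]
      rw [add_dotProduct, single_dotProduct, single_dotProduct]
      simp only [Pi.add_apply, mul_one, one_mul]
      have haa : A a a = 0 := by
        simp only [hA, adjMat, Matrix.of_apply, if_neg (H.irrefl)]
      have hbb : A b b = 0 := by
        simp only [hA, adjMat, Matrix.of_apply, if_neg (H.irrefl)]
      have hab1 : A a b = 1 := by
        simp only [hA, adjMat, Matrix.of_apply, if_pos hab]
      have hba1 : A b a = 1 := by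
        simp only [hA, adjMat, Matrix.of_apply, if_pos hab.symm]
      simp only [Pi.smul_apply, op_smul_eq_mul, mul_one, Matrix.col_apply]
      rw [haa, hbb, hab1, hba1]
      ring
    have hzz : z ⬝ᵥ z = 2 := by
      rw [hzdef, add_dotProduct, single_dotProduct, single_dotProduct]
      simp only [Pi.add_apply, one_mul]
      have hne2 : a ≠ b := H.ne_of_adj hab
      rw [Pi.single_eq_same, Pi.single_eq_of_ne hne2, Pi.single_eq_of_ne (Ne.symm hne2),
        Pi.single_eq_same]
      ring
    have := hray z
    rw [hQz, hzz] at this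
    linarith
  -- positivity
  have hwnn : ∀ u, 0 ≤ w u := fun u => abs_nonneg _
  have hzero : ∀ u, w u = 0 → ∀ v, H.Adj u v → w v = 0 := by
    intro u hu v huv
    have h := congrFun hweig u
    rw [hA, adj_mulVec] at h
    have h2 : (μ • w) u = 0 := by
      rw [Pi.smul_apply, hu, smul_eq_mul, mul_zero]
    rw [h2] at h
    have h3 := (Finset.sum_eq_zero_iff_of_nonneg (fun j _ => by
      split
      · exact hwnn j
      · exact le_refl 0)).1 h v (Finset.mem_univ v)
    rw [if_pos huv] at h3
    exact h3
  have hprop : ∀ (c d : Fin N) (p : H.Walk c d), w c = 0 → w d = 0 := by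
    intro c d p
    induction p with
    | nil => exact id
    | cons h q ih => intro h0; exact ih (hzero _ h0 _ h)
  have hex : ∃ u, w u ≠ 0 := by
    by_contra hcon
    push_neg at hcon
    have : w ⬝ᵥ w = 0 := by
      show ∑ u, w u * w u = 0
      apply Finset.sum_eq_zero
      intro u _
      rw [hcon u, mul_zero]
    rw [hw1] at this
    norm_num at this
  obtain ⟨v0, hv0⟩ := hex
  have hwpos : ∀ u, 0 < w u := by
    intro u
    rcases (hwnn u).lt_or_eq with h | h
    · exact h
    · exfalso
      obtain ⟨p⟩ := hH.preconnected u v0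
      exact hv0 (hprop u v0 p h.symm)
  exact ⟨μ, w, hwpos, hweig⟩

end Perron


lemma kite_adj {n r : ℕ} {u v : Fin n} : (kiteGraph n r).Adj u v ↔ u ≠ v ∧
    ((u.val < r ∧ v.val < r ∧ (u.val + 1 = v.val ∨ v.val + 1 = u.val)) ∨
      (r ≤ u.val + 1 ∧ r ≤ v.val + 1)) := Iff.rfl

lemma fin_ne_of_val {n : ℕ} {u v : Fin n} (h : u.val ≠ v.val) : u ≠ v :=
  fun hh => h (congrArg Fin.val hh)

lemma kite_connected {n r : ℕ} (hr : 1 ≤ r) (hrn : r ≤ n) : (kiteGraph n r).Connected := by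
  have hn : 0 < n := le_trans hr hrn
  rw [SimpleGraph.connected_iff]
  have hub : r - 1 < n := by omega
  have key : ∀ d (u : Fin n), r - 1 - u.val = d →
      (kiteGraph n r).Reachable u ⟨r-1, hub⟩ := by
    intro d
    induction d with
    | zero =>
      intro u hu
      rcases eq_or_ne u ⟨r-1, hub⟩ with rfl | hne
      · exact SimpleGraph.Reachable.refl _
      · have huv : r - 1 ≤ u.val := by omega
        apply SimpleGraph.Adj.reachable
        refine ⟨hne, Or.inr ⟨by omega, ?_⟩⟩
        show r ≤ (r-1) + 1
        omega
    | succ d ih =>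
      intro u hu
      have hlt : u.val < r - 1 := by omega
      have h1 : u.val + 1 < n := by omega
      have hadj : (kiteGraph n r).Adj u ⟨u.val+1, h1⟩ := by
        refine ⟨fin_ne_of_val ?_, Or.inl ⟨by omega, ?_, Or.inl rfl⟩⟩
        · show u.val ≠ u.val + 1
          omega
        · show u.val + 1 < r
          omega
      refine hadj.reachable.trans (ih ⟨u.val+1, h1⟩ ?_)
      show r - 1 - (u.val + 1) = d
      omega
  constructor
  · intro u v
    exact (key _ u rfl).trans (key _ v rfl).symm
  · exact ⟨⟨0, hn⟩⟩

lemma kite_adj_zero {n r : ℕ} (hr : 2 ≤ r) (hrn : r ≤ n) (v : Fin n) :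
    (kiteGraph n r).Adj ⟨0, by omega⟩ v ↔ v = ⟨1, by omega⟩ := by
  constructor
  · rintro ⟨hne, h⟩
    have hne' : (0:ℕ) ≠ v.val := fun hv => (hne (Fin.ext hv)).elim
    rcases h with ⟨h1, h2, h3⟩ | ⟨h1, h2⟩
    · have h3' : 0 + 1 = v.val ∨ v.val + 1 = 0 := h3
      apply Fin.ext
      show v.val = 1
      omega
    · have h1' : r ≤ 0 + 1 := h1
      omega
  · rintro rfl
    refine ⟨fin_ne_of_val ?_, Or.inl ⟨?_, ?_, Or.inl ?_⟩⟩
    · show (0:ℕ) ≠ 1; omega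
    · show 0 < r; omega
    · show 1 < r; omega
    · rfl

lemma kite_adj_mid {n r : ℕ} (hrn : r ≤ n) {i : ℕ} (hi : i + 3 ≤ r) (v : Fin n) :
    (kiteGraph n r).Adj ⟨i+1, by omega⟩ v ↔ (v = ⟨i, by omega⟩ ∨ v = ⟨i+2, by omega⟩) := by
  constructor
  · rintro ⟨hne, h⟩
    have hne' : (i+1:ℕ) ≠ v.val := fun hv => (hne (Fin.ext hv)).elim
    rcases h with ⟨h1, h2, h3⟩ | ⟨h1, h2⟩
    · have h3' : (i+1) + 1 = v.val ∨ v.val + 1 = i+1 := h3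
      rcases h3' with h3' | h3'
      · right; apply Fin.ext; show v.val = i + 2; omega
      · left; apply Fin.ext; show v.val = i; omega
    · have h1' : r ≤ (i+1) + 1 := h1
      omega
  · rintro (rfl | rfl)
    · refine ⟨fin_ne_of_val ?_, Or.inl ⟨?_, ?_, Or.inr ?_⟩⟩
      · show i+1 ≠ i; omega
      · show i+1 < r; omega
      · show i < r; omega
      · rfl
    · refine ⟨fin_ne_of_val ?_, Or.inl ⟨?_, ?_, Or.inl ?_⟩⟩
      · show i+1 ≠ i+2; omega
      · show i+1 < r; omega
      · show i+2 < r; omega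
      · rfl

lemma kite_adj_clique {n r : ℕ} {u v : Fin n} (hu : r ≤ u.val + 1) (hv : r ≤ v.val + 1)
    (hne : u ≠ v) : (kiteGraph n r).Adj u v := ⟨hne, Or.inr ⟨hu, hv⟩⟩

-- sum helpers
lemma sum_if_eq_single {n : ℕ} (y : Fin n → ℝ) (p : Fin n → Prop) (a : Fin n)
    (hp : ∀ v, p v ↔ v = a) :
    (∑ v, if p v then y v else 0) = y a := by
  rw [Finset.sum_congr rfl (fun v _ => by rw [if_congr (hp v) rfl rfl])]
  simp

lemma sum_if_eq_pair {n : ℕ} (y : Fin n → ℝ) (p : Fin n → Prop) (a b : Fin n) (hab : a ≠ b)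
    (hp : ∀ v, p v ↔ (v = a ∨ v = b)) :
    (∑ v, if p v then y v else 0) = y a + y b := by
  rw [Finset.sum_congr rfl (fun v _ => by rw [if_congr (hp v) rfl rfl])]
  have key : ∀ v : Fin n, (if (v = a ∨ v = b) then y v else 0)
      = (if v = a then y v else 0) + (if v = b then y v else 0) := by
    intro v
    by_cases h1 : v = a <;> by_cases h2 : v = b
    · exact absurd (h1 ▸ h2) hab
    · subst h1
      rw [if_pos (Or.inl rfl), if_pos rfl, if_neg h2]
      ring
    · subst h2
      rw [if_pos (Or.inr rfl), if_pos rfl, if_neg h1]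
      ring
    · rw [if_neg (by tauto), if_neg h1, if_neg h2]
      ring
  rw [Finset.sum_congr rfl (fun v _ => key v), Finset.sum_add_distrib]
  simp

lemma sum_if_ge_single {n : ℕ} (y : Fin n → ℝ) (hy : ∀ v, 0 ≤ y v) (p : Fin n → Prop)
    (a : Fin n) (ha : p a) :
    y a ≤ ∑ v, if p v then y v else 0 := by
  have hnn : ∀ v ∈ Finset.univ, 0 ≤ (fun v => if p v then y v else 0) v := by
    intro v _
    by_cases h : p v <;> simp [h, hy v]
  have h := Finset.single_le_sum hnn (Finset.mem_univ a)
  simpa [ha] using h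

lemma sum_if_ge_subset {n : ℕ} (y : Fin n → ℝ) (hy : ∀ v, 0 ≤ y v) (p : Fin n → Prop)
    (t : Finset (Fin n)) (ht : ∀ v ∈ t, p v) :
    ∑ v ∈ t, y v ≤ ∑ v, if p v then y v else 0 := by
  calc ∑ v ∈ t, y v = ∑ v ∈ t, (if p v then y v else 0) :=
        Finset.sum_congr rfl (fun v hv => by rw [if_pos (ht v hv)])
    _ ≤ ∑ v, if p v then y v else 0 := by
        apply Finset.sum_le_sum_of_subset_of_nonneg (Finset.subset_univ t)
        intro v _ _
        by_cases h : p v <;> simp [h, hy v]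

/-- main kite estimate : any principal eigenpair of the kite has ratio at least
`Fq (n-r) (r-1)`. -/
lemma kite_ratio_bound {n r : ℕ} (hr : 2 ≤ r) (hrn : r + 2 ≤ n) (hcl : 2 ≤ n - r)
    {lam : ℝ} {y : Fin n → ℝ} (hpe : IsPrincipalEigenpair (kiteGraph n r) lam y) :
    Fq ((n - r : ℕ) : ℝ) (r - 1) ≤ pRatio y := by
  have ypos := hpe.1
  have hn : 0 < n := by omega
  -- the clique
  set C : Finset (Fin n) := Finset.image (fun j : Fin (n - (r-1)) => ⟨r-1+j.val, by omega⟩)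
    Finset.univ with hC
  have hCmem : ∀ u ∈ C, r ≤ u.val + 1 := by
    intro u hu
    rw [hC, Finset.mem_image] at hu
    obtain ⟨j, _, rfl⟩ := hu
    show r ≤ r - 1 + j.val + 1
    omega
  have hCcard : C.card = n - (r-1) := by
    rw [hC, Finset.card_image_of_injective _ ?_, Finset.card_univ, Fintype.card_fin]
    intro j1 j2 hj
    have := congrArg Fin.val hj
    simp only at this
    exact Fin.ext (by omega)
  have hCne : C.Nonempty := by
    rw [← Finset.card_pos, hCcard]; omega
  obtain ⟨u0, hu0C, hu0min⟩ := C.exists_min_image y hCne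
  have hlam : ((n - r : ℕ) : ℝ) ≤ lam := by
    have heq := eigen_eq hpe u0
    have hge : ∑ v ∈ C.erase u0, y v ≤ ∑ v, if (kiteGraph n r).Adj u0 v then y v else 0 := by
      apply sum_if_ge_subset y (fun v => le_of_lt (ypos v))
      intro v hv
      exact kite_adj_clique (hCmem u0 hu0C) (hCmem v (Finset.mem_of_mem_erase hv))
        (Ne.symm (Finset.ne_of_mem_erase hv))
    have hcard : (C.erase u0).card = n - r := by
      rw [Finset.card_erase_of_mem hu0C, hCcard]; omega
    have hlb : ((n - r : ℕ) : ℝ) * y u0 ≤ ∑ v ∈ C.erase u0, y v := by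
      have := Finset.card_nsmul_le_sum (C.erase u0) y (y u0)
        (fun v hv => hu0min v (Finset.mem_of_mem_erase hv))
      rw [hcard, nsmul_eq_mul] at this
      exact this
    have hy0 : 0 < y u0 := ypos u0
    have : ((n - r : ℕ) : ℝ) * y u0 ≤ lam * y u0 := by
      rw [heq]; linarith
    exact le_of_mul_le_mul_right (by linarith [this]) hy0
  have hlam2 : (2:ℝ) ≤ lam := by
    refine le_trans ?_ hlam
    exact_mod_cast hcl
  -- path entries
  set Y : ℕ → ℝ := fun i => y ⟨min i (n-1), by omega⟩ with hY
  have hYeq : ∀ i (h : i < n), Y i = y ⟨i, h⟩ := by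
    intro i h
    simp only [hY]
    congr 1
    apply Fin.ext
    show min i (n-1) = i
    omega
  have hYpos : ∀ i, 0 < Y i := fun i => ypos _
  have eq0 : lam * Y 0 = Y 1 := by
    have heq := eigen_eq hpe ⟨0, by omega⟩
    rw [sum_if_eq_single y _ ⟨1, by omega⟩ (kite_adj_zero hr (by omega))] at heq
    rw [hYeq 0 (by omega), hYeq 1 (by omega)]
    exact heq
  have eqmid : ∀ i, i + 3 ≤ r → lam * Y (i+1) = Y i + Y (i+2) := by
    intro i hi
    have heq := eigen_eq hpe ⟨i+1, by omega⟩
    rw [sum_if_eq_pair y _ ⟨i, by omega⟩ ⟨i+2, by omega⟩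
      (fin_ne_of_val (by show i ≠ i+2; omega)) (kite_adj_mid (by omega) hi)] at heq
    rw [hYeq (i+1) (by omega), hYeq i (by omega), hYeq (i+2) (by omega)]
    exact heq
  -- ratio chain
  have chain : ∀ i, i + 1 ≤ r - 1 → Sq lam i * Y i ≤ Y (i+1) := by
    intro i
    induction i with
    | zero =>
      intro _
      rw [show Sq lam 0 = lam from rfl]
      exact le_of_eq eq0
    | succ i ih =>
      intro hi1
      have hprev : Sq lam i * Y i ≤ Y (i+1) := ih (by omega)
      have heq : lam * Y (i+1) = Y i + Y (i+2) := eqmid i (by omega)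
      have hSpos : 0 < Sq lam i := Sq_pos hlam2 i
      have hinv : Y i ≤ (Sq lam i)⁻¹ * Y (i+1) := by
        rw [inv_mul_eq_div, le_div_iff₀ hSpos]
        linarith [hprev]
      show (lam - (Sq lam i)⁻¹) * Y (i+1) ≤ Y (i+2)
      have : Y (i+2) = lam * Y (i+1) - Y i := by linarith
      rw [this]
      have : (Sq lam i)⁻¹ * Y (i+1) ≥ Y i := hinv
      nlinarith [hYpos (i+1)]
  have prod : ∀ i, i ≤ r - 1 → Fq lam i * Y 0 ≤ Y i := by
    intro i
    induction i with
    | zero =>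
      intro _
      rw [show Fq lam 0 = 1 from rfl, one_mul]
    | succ i ih =>
      intro hi1
      have h1 := ih (by omega)
      have h2 := chain i (by omega)
      show Fq lam i * Sq lam i * Y 0 ≤ Y (i+1)
      have hS := Sq_pos hlam2 i
      have hF := Fq_pos hlam2 i
      nlinarith [hYpos 0, hYpos i]
  -- conclude
  have hkey : Fq lam (r-1) * Y 0 ≤ Y (r-1) := prod (r-1) (le_refl _)
  have hY0 : 0 < Y 0 := hYpos 0
  have hsup : Y (r-1) ≤ ⨆ v, y v := by
    rw [hYeq (r-1) (by omega)]
    exact le_ciSup (Set.Finite.bddAbove (Set.finite_range y)) _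
  haveI : Nonempty (Fin n) := ⟨⟨0, hn⟩⟩
  obtain ⟨j, hj⟩ := Finite.exists_min y
  have hinf_pos : 0 < ⨅ v, y v := lt_of_lt_of_le (ypos j) (le_ciInf hj)
  have hinf_le : ⨅ v, y v ≤ Y 0 := ciInf_le (Set.Finite.bddBelow (Set.finite_range y)) _
  have hfinal : Fq lam (r-1) ≤ pRatio y := by
    rw [← le_div_iff₀ hY0] at hkey
    refine le_trans hkey ?_
    rw [pRatio]
    apply div_le_div₀ (le_trans (le_of_lt (hYpos (r-1))) hsup |>.trans (le_refl _)) hsup hinf_pos hinf_le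
  refine le_trans ?_ hfinal
  exact Fq_mono (by exact_mod_cast hcl) hlam (r-1)



set_option maxHeartbeats 3000000 in
/-- Extremal setup: `G` is a connected graph on `n ≥ 5000` vertices maximizing the
principal ratio among all connected graphs on `n` vertices; `x` is its principal
eigenvector scaled so that the maximum entry is `1`; `v 0, …, v (k-1)` is a shortest path
from a minimum-entry vertex to a maximum-entry vertex, where `k - 1` is the shortest
distance between any minimum-entry vertex and any maximum-entry vertex. -/
theorem spectral_radius_upper_bound
    {n k : ℕ} (hn : 5000 ≤ n) (hk : 2 ≤ k)
    (G : SimpleGraph (Fin n)) (hG : G.Connected)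
    (lam : ℝ) (x : Fin n → ℝ)
    (hpe : IsPrincipalEigenpair G lam x)
    (hx1 : ∀ u, x u ≤ 1)
    (hext : ∀ (G' : SimpleGraph (Fin n)), G'.Connected →
      ∀ (lam' : ℝ) (x' : Fin n → ℝ), IsPrincipalEigenpair G' lam' x' →
        pRatio x' ≤ pRatio x)
    (v : Fin k → Fin n) (hinj : Function.Injective v)
    (hpath : ∀ (i : ℕ) (hi : i + 1 < k), G.Adj (v ⟨i, by omega⟩) (v ⟨i + 1, hi⟩))
    (hmin : ∀ u, x (v ⟨0, by omega⟩) ≤ x u)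
    (hvk : x (v ⟨k - 1, by omega⟩) = 1)
    (hdist : G.dist (v ⟨0, by omega⟩) (v ⟨k - 1, by omega⟩) = k - 1)
    (hshort : ∀ a b : Fin n, (∀ u, x a ≤ x u) → x b = 1 → k - 1 ≤ G.dist a b) :
    lam < (n : ℝ) - k + 3 / 5 := by
  by_contra hcon
  push_neg at hcon
  haveI : Nonempty (Fin n) := ⟨⟨0, by omega⟩⟩
  have xpos := hpe.1
  have hkn : k ≤ n := by
    have := Fintype.card_le_of_injective v hinj
    simpa using this
  -- ℕ-indexed path
  set vv : ℕ → Fin n := fun i => v ⟨min i (k-1), by omega⟩ with hvvdef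
  have hvveq : ∀ i (h : i < k), vv i = v ⟨i, h⟩ := by
    intro i h
    simp only [hvvdef]
    congr 1
    apply Fin.ext
    show min i (k-1) = i
    omega
  have vvinj : ∀ i j, i < k → j < k → vv i = vv j → i = j := by
    intro i j hi hj hij
    rw [hvveq i hi, hvveq j hj] at hij
    have := congrArg Fin.val (hinj hij)
    simpa using this
  have adjvv : ∀ i, i + 1 < k → G.Adj (vv i) (vv (i+1)) := by
    intro i hi
    rw [hvveq i (by omega), hvveq (i+1) hi]
    exact hpath i hi
  set X : ℕ → ℝ := fun i => x (vv i) with hXdef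
  have hX0min : ∀ u, X 0 ≤ x u := by
    intro u
    show x (vv 0) ≤ x u
    rw [hvveq 0 (by omega)]
    exact hmin u
  have hXk1 : X (k-1) = 1 := by
    show x (vv (k-1)) = 1
    rw [hvveq (k-1) (by omega)]
    exact hvk
  have hXpos : ∀ i, 0 < X i := fun i => xpos _
  -- walks along the path
  have walkP : ∀ i, i < k → ∃ p : G.Walk (vv 0) (vv i), p.length = i := by
    intro i
    induction i with
    | zero => exact fun _ => ⟨SimpleGraph.Walk.nil, rfl⟩
    | succ i ih =>
      intro h
      obtain ⟨p, hp⟩ := ih (by omega)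
      exact ⟨p.concat (adjvv i h), by rw [SimpleGraph.Walk.length_concat, hp]⟩
  have distle : ∀ i, i < k → G.dist (vv 0) (vv i) ≤ i := by
    intro i h
    obtain ⟨p, hp⟩ := walkP i h
    exact le_trans (SimpleGraph.dist_le p) (le_of_eq hp)
  have hdist' : G.dist (vv 0) (vv (k-1)) = k - 1 := by
    rw [hvveq 0 (by omega), hvveq (k-1) (by omega)]
    exact hdist
  have nonadj : ∀ i, i + 2 < k → ¬ G.Adj (vv (k-1)) (vv i) := by
    intro i hi hadj
    have h1 := hG.dist_triangle (u := vv 0) (v := vv i) (w := vv (k-1))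
    have h2 : G.dist (vv i) (vv (k-1)) ≤ 1 := by
      have := SimpleGraph.dist_le hadj.symm.toWalk
      simpa using this
    have h3 := distle i (by omega)
    omega
  -- the degree estimate at the top vertex
  set b : ℝ := X (k-2) with hbdef
  have hmcast : ((n-k : ℕ) : ℝ) = (n:ℝ) - k := by
    push_cast [hkn]
    ring
  have hlam_le : lam ≤ ((n-k:ℕ):ℝ) + b := by
    have heq := eigen_eq hpe (vv (k-1))
    have hXk1' : x (vv (k-1)) = 1 := hXk1
    rw [hXk1', mul_one] at heq
    classical
    set bad : Finset (Fin n) :=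
      (Finset.image (fun i : Fin (k-2) => vv i.val) Finset.univ) ∪ {vv (k-1)} with hbad
    have hmem_im : ∀ u, u ∈ bad ↔ ((∃ i : Fin (k-2), vv i.val = u) ∨ u = vv (k-1)) := by
      intro u
      rw [hbad, Finset.mem_union, Finset.mem_singleton, Finset.mem_image]
      simp
    have hbadcard : bad.card = k - 1 := by
      rw [hbad, Finset.card_union_of_disjoint]
      · rw [Finset.card_image_of_injective _ ?_, Finset.card_univ, Fintype.card_fin,
          Finset.card_singleton]
        · omega
        · intro i j hij
          have : (i:ℕ) = (j:ℕ) := vvinj _ _ (by omega) (by omega) hij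
          exact Fin.ext this
      · rw [Finset.disjoint_singleton_right, Finset.mem_image]
        rintro ⟨i, _, hi⟩
        have := vvinj i.val (k-1) (by omega) (by omega) hi
        omega
    have hnadj : ∀ u ∈ bad, ¬ G.Adj (vv (k-1)) u := by
      intro u hu
      rcases (hmem_im u).1 hu with ⟨i, rfl⟩ | rfl
      · exact nonadj i.val (by omega)
      · exact G.irrefl
    have hknotin : vv (k-2) ∉ bad := by
      rw [hmem_im]
      rintro (⟨i, hi⟩ | hi)
      · have := vvinj i.val (k-2) (by omega) (by omega) hi
        omega
      · have := vvinj (k-2) (k-1) (by omega) (by omega) hi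
        omega
    set g : Fin n → ℝ := fun u => if u ∈ bad then 0 else (if u = vv (k-2) then b else 1)
      with hg
    have hle : ∀ u, (if G.Adj (vv (k-1)) u then x u else 0) ≤ g u := by
      intro u
      rw [hg]
      by_cases hu : u ∈ bad
      · rw [if_neg (hnadj u hu)]
        simp only [if_pos hu]
        exact le_refl 0
      · simp only [if_neg hu]
        by_cases hu2 : u = vv (k-2)
        · rw [if_pos hu2]
          subst hu2
          split
          · exact le_refl _
          · exact le_of_lt (hXpos (k-2))
        · rw [if_neg hu2]
          split
          · exact hx1 u
          · norm_num
    have hsum1 : lam ≤ ∑ u, g u := by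
      rw [heq]
      exact Finset.sum_le_sum (fun u _ => hle u)
    set s : Finset (Fin n) := Finset.univ \ bad with hs
    have hsmem : vv (k-2) ∈ s := by
      rw [hs, Finset.mem_sdiff]
      exact ⟨Finset.mem_univ _, hknotin⟩
    have hsum2 : ∑ u, g u = ∑ u ∈ s, g u := by
      symm
      apply Finset.sum_subset (Finset.subset_univ s)
      intro u _ hu
      rw [hs, Finset.mem_sdiff] at hu
      push_neg at hu
      rw [hg]
      simp only [if_pos (hu (Finset.mem_univ u))]
    have hsum3 : ∑ u ∈ s, g u = ∑ u ∈ s, (if u = vv (k-2) then b else 1) := by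
      apply Finset.sum_congr rfl
      intro u hu
      rw [hs, Finset.mem_sdiff] at hu
      rw [hg]
      simp only [if_neg hu.2]
    have hsum4 : ∑ u ∈ s, (if u = vv (k-2) then b else 1) = b + ((s.card - 1 : ℕ) : ℝ) := by
      rw [← Finset.add_sum_erase _ _ hsmem, if_pos rfl]
      congr 1
      rw [Finset.sum_congr rfl (fun u hu => if_neg (Finset.ne_of_mem_erase hu))]
      rw [Finset.sum_const, nsmul_eq_mul, mul_one, Finset.card_erase_of_mem hsmem]
    have hscard : s.card = n - (k-1) := by
      rw [hs, Finset.card_sdiff_of_subset (Finset.subset_univ bad), Finset.card_univ,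
        Fintype.card_fin, hbadcard]
    have hfin : (s.card - 1 : ℕ) = n - k := by
      rw [hscard]
      omega
    rw [hsum2, hsum3, hsum4, hfin] at hsum1
    linarith
  have hb35 : 3/5 ≤ b := by
    rw [hmcast] at hlam_le
    linarith
  have hb1 : b < 1 := by
    rcases lt_or_eq_of_le (hx1 (vv (k-2))) with h | h
    · exact h
    · exfalso
      have hs := hshort (vv 0) (vv (k-2)) (fun u => hX0min u) h
      have hd := distle (k-2) (by omega)
      omega
  have hlam_pos : 0 < lam := by
    have : (0:ℝ) ≤ (n:ℝ) - k := by
      rw [← hmcast]; positivity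
    linarith
  -- chain bounds
  have step1 : ∀ i, i + 1 < k → X (i+1) ≤ lam * X i := by
    intro i hi
    have heq := eigen_eq hpe (vv i)
    rw [heq]
    exact sum_if_ge_single x (fun u => le_of_lt (xpos u)) _ _ (adjvv i hi)
  have stepin : ∀ i, i + 2 ≤ k - 2 → X i + X (i+2) ≤ lam * X (i+1) := by
    intro i hi
    have heq := eigen_eq hpe (vv (i+1))
    rw [heq]
    have hne : vv i ≠ vv (i+2) := by
      intro h
      have := vvinj i (i+2) (by omega) (by omega) h
      omega
    have hsum : X i + X (i+2) = ∑ w ∈ ({vv i, vv (i+2)} : Finset (Fin n)), x w := by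
      rw [Finset.sum_pair hne]
    rw [hsum]
    apply sum_if_ge_subset x (fun u => le_of_lt (xpos u))
    intro w hw
    rcases Finset.mem_insert.1 hw with rfl | hw
    · exact (adjvv i (by omega)).symm
    · rw [Finset.mem_singleton.1 hw]
      exact adjvv (i+1) (by omega)
  have chainX : 2 ≤ lam → ∀ i, i + 1 ≤ k - 2 → X (i+1) ≤ Sq lam i * X i := by
    intro hlam2 i
    induction i with
    | zero =>
      intro hi
      rw [show Sq lam 0 = lam from rfl]
      exact step1 0 (by omega)
    | succ i ih =>
      intro hi
      have hprev := ih (by omega)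
      have hstep := stepin i (by omega)
      have hSpos : 0 < Sq lam i := Sq_pos hlam2 i
      have hinv : (Sq lam i)⁻¹ * X (i+1) ≤ X i := by
        rw [inv_mul_eq_div, div_le_iff₀ hSpos]
        linarith [hprev]
      show X (i+2) ≤ (lam - (Sq lam i)⁻¹) * X (i+1)
      nlinarith [hXpos (i+1)]
  have prodX : 2 ≤ lam → ∀ i, i ≤ k - 2 → X i ≤ Fq lam i * X 0 := by
    intro hlam2 i
    induction i with
    | zero =>
      intro _
      rw [show Fq lam 0 = 1 from rfl, one_mul]
    | succ i ih =>
      intro hi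
      have h1 := ih (by omega)
      have h2 := chainX hlam2 i (by omega)
      show X (i+1) ≤ Fq lam i * Sq lam i * X 0
      have hS := Sq_pos hlam2 i
      have hF := Fq_pos hlam2 i
      nlinarith [hXpos 0, hXpos i]
  have crudeX : ∀ i, i ≤ k - 2 → X i ≤ lam^i * X 0 := by
    intro i
    induction i with
    | zero => intro _; rw [pow_zero, one_mul]
    | succ i ih =>
      intro hi
      have h1 := ih (by omega)
      have h2 := step1 i (by omega)
      calc X (i+1) ≤ lam * X i := h2
        _ ≤ lam * (lam^i * X 0) := by nlinarith [hXpos i]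
        _ = lam^(i+1) * X 0 := by ring
  -- the ratio of x
  have hsupx : (⨆ u, x u) = 1 := by
    apply le_antisymm (ciSup_le hx1)
    have h := le_ciSup (Set.Finite.bddAbove (Set.finite_range x)) (vv (k-1))
    exact le_trans (le_of_eq hXk1.symm) h
  have hinfx : (⨅ u, x u) = X 0 := by
    apply le_antisymm (ciInf_le (Set.Finite.bddBelow (Set.finite_range x)) (vv 0))
    exact le_ciInf hX0min
  have hPx : pRatio x = 1 / X 0 := by
    rw [pRatio, hsupx, hinfx]
  -- kite comparison, common part
  have kite_cmp : ∀ r : ℕ, 2 ≤ r → r + 2 ≤ n → 2 ≤ n - r →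
      Fq ((n-r:ℕ):ℝ) (r-1) ≤ 1 / X 0 := by
    intro r h1 h2 h3
    have hconn := kite_connected (n := n) (r := r) (by omega) (by omega)
    obtain ⟨lam', y, hpe'⟩ := perron_exists (by omega) (kiteGraph n r) hconn
    have hb1 := kite_ratio_bound h1 h2 h3 hpe'
    have hb2 := hext _ hconn _ _ hpe'
    rw [hPx] at hb2
    linarith
  -- case analysis
  set mn : ℕ := n - k with hmndef
  by_cases hcase1 : mn ≤ 1
  · -- tiny clique: crude bound suffices
    have hlam2 : lam ≤ 2 := by
      have : ((n-k:ℕ):ℝ) ≤ 1 := by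
        rw [← hmndef]
        exact_mod_cast hcase1
      linarith [hlam_le, hx1 (vv (k-2))]
    have hcr := crudeX (k-2) (le_refl _)
    have hX0 : 3/5 ≤ lam^(k-2) * X 0 := le_trans hb35 hcr
    have hup : 1 / X 0 ≤ (5/3) * 2^(k-2) := by
      rw [div_le_iff₀ (hXpos 0)]
      have hpow : lam^(k-2) ≤ 2^(k-2) := pow_le_pow_left₀ (le_of_lt hlam_pos) hlam2 _
      have h3 : lam^(k-2) * X 0 ≤ 2^(k-2) * X 0 :=
        mul_le_mul_of_nonneg_right hpow (le_of_lt (hXpos 0))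
      linarith
    have hkite := kite_cmp (n-5) (by omega) (by omega) (by omega)
    have h5 : ((n-(n-5):ℕ):ℝ) = 5 := by
      have : n-(n-5) = 5 := by omega
      rw [this]; norm_num
    rw [h5] at hkite
    have hge : (4:ℝ)^(n-5-1) ≤ Fq 5 (n-5-1) := by
      have := Fq_ge (μ := 5) (by norm_num) (n-5-1)
      norm_num at this ⊢
      exact this
    have hchain : (4:ℝ)^(n-6) ≤ (5/3) * 2^(n-2) := by
      have e1 : n-5-1 = n-6 := by omega
      rw [e1] at hge hkite
      have h2n : (2:ℝ)^(k-2) ≤ 2^(n-2) := by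
        apply pow_le_pow_right₀ (by norm_num)
        omega
      linarith [hge, hkite, hup, h2n]
    have hsplit : (4:ℝ)^(n-6) = 2^(n-2) * 2^(n-10) := by
      have : (4:ℝ) = 2^2 := by norm_num
      rw [this, ← pow_mul]
      rw [← pow_add]
      congr 1
      omega
    have hbig : (2:ℝ) ≤ 2^(n-10) := by
      calc (2:ℝ) = 2^1 := by norm_num
        _ ≤ 2^(n-10) := pow_le_pow_right₀ (by norm_num) (by omega)
    have h2pos : (0:ℝ) < 2^(n-2) := by positivity
    have hmul : (2:ℝ)^(n-2) * 2 ≤ 2^(n-2) * 2^(n-10) :=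
      mul_le_mul_of_nonneg_left hbig (le_of_lt h2pos)
    linarith [hchain, hsplit, hmul, h2pos]
  · push_neg at hcase1  -- 2 ≤ mn
    have hmn2 : 2 ≤ mn := hcase1
    have hmnlam : ((mn:ℕ):ℝ) + 3/5 ≤ lam := by
      rw [hmndef, hmcast]
      exact hcon
    have hlam2 : (2:ℝ) ≤ lam := by
      have : (2:ℝ) ≤ ((mn:ℕ):ℝ) := by exact_mod_cast hmn2
      linarith
    have hlam_ub : lam ≤ (mn:ℝ) + b := by
      rw [hmndef]
      exact hlam_le
    have hprod := prodX hlam2 (k-2) (le_refl _)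
    rw [← hbdef] at hprod
    by_cases hcase2 : 5*n + 12 ≤ 8*k
    · -- long path: compare with kite of path length k-1
      have hkite := kite_cmp (k-1) (by omega) (by omega) (by omega)
      have hcast2 : ((n-(k-1):ℕ):ℝ) = (mn:ℝ) + 1 := by
        have : n-(k-1) = mn + 1 := by omega
        rw [this]
        push_cast
        ring
      have hidx : k-1-1 = k-2 := by omega
      rw [hcast2, hidx] at hkite
      -- lower bound for Fq (mn+1) (k-2)
      have hmu : lam ≤ (mn:ℝ) + 1 := by linarith [hb1]
      have hrl := Fq_ratio_lower hlam2 hmu (k-2)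
      have hbern : 1 + ((k-2:ℕ):ℝ) * (((mn:ℝ)+1-lam)/lam) ≤ (1 + ((mn:ℝ)+1-lam)/lam)^(k-2) := by
        apply one_add_mul_le_pow
        have : 0 ≤ ((mn:ℝ)+1-lam)/lam := div_nonneg (by linarith) (le_of_lt hlam_pos)
        linarith
      have hd : 1 - b ≤ (mn:ℝ)+1-lam := by linarith
      -- numeric : b * (1 + (k-2)*(1-b)/lam) > 1
      have hkbig : lam < b * ((k:ℝ)-2) := by
        have h82 : (5:ℝ)*n + 12 ≤ 8*k := by exact_mod_cast hcase2
        have hm2 : (mn:ℝ) = (n:ℝ) - k := by rw [hmndef, hmcast]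
        nlinarith [hb35, hlam_ub, hb1]
      have hk2cast : ((k:ℕ):ℝ) - 2 = ((k-2:ℕ):ℝ) := by
        push_cast [hk]
        ring
      have hfinal : 1/b < (1 + ((mn:ℝ)+1-lam)/lam)^(k-2) := by
        have h1 : 1 < b * ((k:ℝ)-2) / lam := by
          rw [lt_div_iff₀ hlam_pos]; linarith
        have h2 : (0:ℝ) < 1 - b := by linarith
        have h3 : 1/b < 1 + ((k:ℝ)-2) * ((1-b)/lam) := by
          rw [div_lt_iff₀ (by linarith : (0:ℝ) < b)]
          have heqq : (1 + ((k:ℝ)-2) * ((1-b)/lam)) * b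
              = 1 + (1-b) * (b * ((k:ℝ)-2)/lam - 1) := by
            field_simp
            ring
          rw [heqq]
          nlinarith [mul_pos h2 (by linarith : (0:ℝ) < b * ((k:ℝ)-2) / lam - 1)]
        have hk2nn : (0:ℝ) ≤ (k:ℝ)-2 := by
          have : (2:ℝ) ≤ (k:ℝ) := by exact_mod_cast hk
          linarith
        have hnum : ((1:ℝ)-b) * lam⁻¹ ≤ ((mn:ℝ)+1-lam) * lam⁻¹ :=
          mul_le_mul_of_nonneg_right hd (inv_nonneg.2 (le_of_lt hlam_pos))
        have h4 : 1 + ((k:ℝ)-2) * ((1-b)/lam) ≤ 1 + ((k-2:ℕ):ℝ) * (((mn:ℝ)+1-lam)/lam) := by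
          rw [← hk2cast, div_eq_mul_inv, div_eq_mul_inv]
          have := mul_le_mul_of_nonneg_left hnum hk2nn
          linarith
        exact lt_of_lt_of_le h3 (le_trans h4 hbern)
      -- combine
      have hFpos : 0 < Fq lam (k-2) := Fq_pos hlam2 _
      have hupb : 1 / X 0 ≤ Fq lam (k-2) / b := by
        rw [div_le_div_iff₀ (hXpos 0) (by linarith : (0:ℝ) < b)]
        linarith [hprod]
      have hstrict : Fq lam (k-2) / b < Fq ((mn:ℝ)+1) (k-2) := by
        calc Fq lam (k-2) / b = Fq lam (k-2) * (1/b) := by ring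
          _ < Fq lam (k-2) * (1 + ((mn:ℝ)+1-lam)/lam)^(k-2) :=
              mul_lt_mul_of_pos_left hfinal hFpos
          _ ≤ Fq ((mn:ℝ)+1) (k-2) := hrl
      linarith [hkite, hupb, hstrict]
    · -- medium/short path: compare with kite of path length k
      push_neg at hcase2
      have hkite := kite_cmp k hk (by omega) (by omega)
      rw [← hmndef] at hkite
      have hmn1874 : 1874 ≤ mn := by omega
      have hmreal : (1874:ℝ) ≤ (mn:ℝ) := by exact_mod_cast hmn1874
      have hmu2 : (2:ℝ) ≤ (mn:ℝ) := by linarith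
      have hm1 : (0:ℝ) < (mn:ℝ)-1 := by linarith
      have hupb : 1 / X 0 ≤ Fq lam (k-2) / b := by
        rw [div_le_div_iff₀ (hXpos 0) (by linarith : (0:ℝ) < b)]
        linarith [hprod]
      have hFpos : 0 < Fq lam (k-2) := Fq_pos hlam2 _
      have hub53 : Fq lam (k-2) / b ≤ (5/3) * Fq lam (k-2) := by
        rw [div_le_iff₀ (by linarith : (0:ℝ) < b)]
        nlinarith [hFpos, hb35]
      have hmono : Fq lam (k-2) ≤ Fq ((mn:ℝ)+1) (k-2) :=
        Fq_mono hlam2 (by linarith) (k-2)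
      have hF2 : Fq ((mn:ℝ)+1) (k-2) ≤ Fq (mn:ℝ) (k-2) * (((mn:ℝ)+1)/((mn:ℝ)-1))^(k-2) :=
        Fq_ratio_upper hmu2 (k-2)
      have hksplit : k - 1 = (k-2) + 1 := by omega
      have hFmn : 0 < Fq (mn:ℝ) (k-2) := Fq_pos hmu2 _
      have hlow : Fq (mn:ℝ) (k-2) * ((mn:ℝ)-1) ≤ Fq (mn:ℝ) (k-1) := by
        rw [hksplit]
        show _ ≤ Fq (mn:ℝ) (k-2) * Sq (mn:ℝ) (k-2)
        have := Sq_ge hmu2 (k-2)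
        nlinarith [hFmn]
      have hexp : ((((mn:ℝ))+1)/(((mn:ℝ))-1))^(k-2) ≤ 55 := by
        have hq : ((mn:ℝ)+1)/((mn:ℝ)-1) = 1 + 2/((mn:ℝ)-1) := by
          field_simp
          ring
        have h1 : ((mn:ℝ)+1)/((mn:ℝ)-1) ≤ Real.exp (2/((mn:ℝ)-1)) := by
          rw [hq]
          have := Real.add_one_le_exp (2/((mn:ℝ)-1))
          linarith
        have h2 : (((mn:ℝ)+1)/((mn:ℝ)-1))^(k-2) ≤ Real.exp (2/((mn:ℝ)-1))^(k-2) :=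
          pow_le_pow_left₀ (by positivity) h1 _
        have h3 : Real.exp (2/((mn:ℝ)-1))^(k-2) = Real.exp (((k-2:ℕ):ℝ) * (2/((mn:ℝ)-1))) :=
          (Real.exp_nat_mul _ _).symm
        have hc : ((k-2:ℕ):ℝ) ≤ 2*((mn:ℝ))-2 := by
          have h9 : (k-2:ℕ) ≤ 2*mn-2 := by omega
          have h10 : ((k-2:ℕ):ℝ) ≤ ((2*mn-2:ℕ):ℝ) := by exact_mod_cast h9
          have h11 : ((2*mn-2:ℕ):ℝ) = 2*(mn:ℝ)-2 := by
            have h12 : (2:ℕ) ≤ 2*mn := by omega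
            push_cast [h12]
            ring
          linarith
        have h4 : ((k-2:ℕ):ℝ) * (2/((mn:ℝ)-1)) ≤ 4 := by
          have he : ((k-2:ℕ):ℝ) * (2/((mn:ℝ)-1)) = (((k-2:ℕ):ℝ)*2)/((mn:ℝ)-1) := by
            ring
          rw [he, div_le_iff₀ hm1]
          linarith
        have h5 : Real.exp (((k-2:ℕ):ℝ) * (2/((mn:ℝ)-1))) ≤ Real.exp 4 := Real.exp_le_exp.2 h4
        have h6 : Real.exp 4 < 55 := by
          have h7 : Real.exp 4 = Real.exp 1 ^ 4 := by
            rw [← Real.exp_nat_mul]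
            norm_num
          rw [h7]
          have h8 : Real.exp 1 ^ 4 < (2.7182818286:ℝ)^4 := by
            apply pow_lt_pow_left₀ Real.exp_one_lt_d9 (le_of_lt (Real.exp_pos 1))
            norm_num
          have h9 : (2.7182818286:ℝ)^4 < 55 := by norm_num
          linarith
        rw [h3] at h2
        linarith
      -- combine everything
      have hchain2 : Fq (mn:ℝ) (k-2) * ((mn:ℝ)-1) ≤ (5/3) * (Fq (mn:ℝ) (k-2) * 55) := by
        have e1 : Fq (mn:ℝ) (k-1) ≤ 1 / X 0 := hkite
        have e2 : Fq ((mn:ℝ)+1) (k-2) ≤ Fq (mn:ℝ) (k-2) * 55 := by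
          calc Fq ((mn:ℝ)+1) (k-2) ≤ Fq (mn:ℝ) (k-2) * (((mn:ℝ)+1)/((mn:ℝ)-1))^(k-2) := hF2
            _ ≤ Fq (mn:ℝ) (k-2) * 55 := mul_le_mul_of_nonneg_left hexp (le_of_lt hFmn)
        have e3 : (5/3:ℝ) * Fq lam (k-2) ≤ (5/3) * (Fq (mn:ℝ) (k-2) * 55) := by
          have := le_trans hmono e2
          linarith
        linarith [hlow, hupb, hub53]
      have : ((mn:ℝ)-1) ≤ (5/3) * 55 := by
        have h13 := (mul_le_mul_iff_right₀ hFmn).1 (by linarith [hchain2] :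
          Fq (mn:ℝ) (k-2) * ((mn:ℝ)-1) ≤ Fq (mn:ℝ) (k-2) * ((5/3) * 55))
        linarith
      linarith
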